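/- The greedy maximum-coverage selection achieves at least a (1 − 1/e) fraction of the optimal coverage after selecting n sets, for any finite collection of finite sets. -/
import Mathlib

lemma aux_key_17 {ι α : Type*} [DecidableEq ι] [DecidableEq α]
    (D : ι → Finset α) (B : Finset α) (S : Finset ι) (hS : S.Nonempty) :
    ∃ q ∈ S, (S.biUnion D).card ≤ B.card + S.card * ((D q \ B).card) := by
  obtain ⟨q, hq, hmax⟩ := S.exists_max_image (fun q => ((D q \ B).card)) hS
  refine ⟨q, hq, ?_⟩
  have h1 : (S.biUnion D).card ≤ (S.biUnion D \ B).card + B.card :=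
    Finset.card_le_card_sdiff_add_card
  have h2 : S.biUnion D \ B ⊆ S.biUnion (fun q' => D q' \ B) := by
    intro x hx
    simp only [Finset.mem_sdiff, Finset.mem_biUnion] at hx ⊢
    obtain ⟨⟨q', hq', hxq'⟩, hxB⟩ := hx
    exact ⟨q', hq', hxq', hxB⟩
  have h3 : (S.biUnion (fun q' => D q' \ B)).card ≤ ∑ q' ∈ S, (D q' \ B).card :=
    Finset.card_biUnion_le
  have h4 : ∑ q' ∈ S, (D q' \ B).card ≤ S.card * (D q \ B).card := by
    calc ∑ q' ∈ S, (D q' \ B).card ≤ S.card • (D q \ B).card :=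
          Finset.sum_le_card_nsmul _ _ _ (fun x hx => hmax x hx)
      _ = S.card * (D q \ B).card := by simp [smul_eq_mul]
  have := Finset.card_le_card h2
  omega

theorem stmt_17 {ι α : Type*} [DecidableEq ι] [DecidableEq α]
    (D : ι → Finset α) (gsel : ℕ → Finset ι)
    (h0 : gsel 0 = ∅)
    (hstep : ∀ k : ℕ, ∃ q : ι, gsel (k + 1) = insert q (gsel k) ∧
      ∀ q' : ι, ((insert q' (gsel k)).biUnion D).card ≤
        ((insert q (gsel k)).biUnion D).card)
    (n : ℕ) (hn : 0 < n) :
    (∀ S : Finset ι, S.card = n →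
      (1 - (1 - 1 / (n : ℝ)) ^ n) * ((S.biUnion D).card : ℝ) ≤
        (((gsel n).biUnion D).card : ℝ)) ∧
    1 - 1 / Real.exp 1 ≤ 1 - (1 - 1 / (n : ℝ)) ^ n := by
  have hn1 : (1 : ℝ) ≤ (n : ℝ) := by exact_mod_cast hn
  have hnpos : (0 : ℝ) < (n : ℝ) := by linarith
  have hr0 : (0 : ℝ) ≤ 1 - 1 / (n : ℝ) := by
    have : 1 / (n : ℝ) ≤ 1 := by
      rw [div_le_one hnpos]; exact hn1
    linarith
  constructor
  · intro S hS
    set c : ℕ → ℝ := fun k => (((gsel k).biUnion D).card : ℝ) with hc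
    set OPT : ℝ := ((S.biUnion D).card : ℝ) with hOPT
    have hSne : S.Nonempty := by
      rw [← Finset.card_pos, hS]; exact hn
    -- one greedy step
    have step : ∀ k, OPT - c (k + 1) ≤ (1 - 1 / (n : ℝ)) * (OPT - c k) := by
      intro k
      obtain ⟨q, hg, hbest⟩ := hstep k
      set B := (gsel k).biUnion D with hB
      obtain ⟨q', hq'S, hkey⟩ := aux_key_17 D B S hSne
      -- marginal of q' bounded by greedy gain
      have hins : ((insert q' (gsel k)).biUnion D).card = ((D q' \ B).card) + B.card := by
        rw [Finset.biUnion_insert, ← Finset.card_sdiff_add_card]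
      have hgain : ((D q' \ B).card : ℝ) ≤ c (k + 1) - c k := by
        have h1 := hbest q'
        rw [hins] at h1
        have h2 : c (k + 1) = ((insert q (gsel k)).biUnion D).card := by
          rw [hc]; simp [hg]
        have h3 : c k = (B.card : ℝ) := rfl
        rw [h2, h3]
        have := (Nat.cast_le (α := ℝ)).mpr h1
        push_cast at this ⊢
        linarith
      have hkeyR : OPT ≤ c k + (n : ℝ) * ((D q' \ B).card : ℝ) := by
        have := (Nat.cast_le (α := ℝ)).mpr hkey
        push_cast [hS] at this
        rw [hOPT]
        convert this using 2
      have hOPTle : OPT ≤ c k + (n : ℝ) * (c (k + 1) - c k) := by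
        nlinarith
      have hexpand : (1 - 1 / (n : ℝ)) * (OPT - c k)
          = (OPT - c k) - (OPT - c k) / n := by ring
      rw [hexpand]
      have hdiv : (OPT - c k) / n ≤ c (k + 1) - c k := by
        rw [div_le_iff₀ hnpos]
        nlinarith
      linarith
    -- induction
    have hind : ∀ k, OPT - c k ≤ (1 - 1 / (n : ℝ)) ^ k * OPT := by
      intro k
      induction k with
      | zero =>
        have : c 0 = 0 := by simp [hc, h0]
        rw [this]; simp
      | succ k ih =>
        calc OPT - c (k + 1) ≤ (1 - 1 / (n : ℝ)) * (OPT - c k) := step k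
          _ ≤ (1 - 1 / (n : ℝ)) * ((1 - 1 / (n : ℝ)) ^ k * OPT) := by
              exact mul_le_mul_of_nonneg_left ih hr0
          _ = (1 - 1 / (n : ℝ)) ^ (k + 1) * OPT := by ring
    have := hind n
    have : (1 - (1 - 1 / (n : ℝ)) ^ n) * OPT ≤ c n := by linarith [hind n]
    exact this
  · have h1 : (1 - 1 / (n : ℝ)) ^ n ≤ 1 / Real.exp 1 := by
      have hle : 1 - 1 / (n : ℝ) ≤ Real.exp (-(1 / (n : ℝ))) := by
        have := Real.add_one_le_exp (-(1 / (n : ℝ)))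
        linarith
      calc (1 - 1 / (n : ℝ)) ^ n ≤ (Real.exp (-(1 / (n : ℝ)))) ^ n :=
            pow_le_pow_left₀ hr0 hle n
        _ = Real.exp ((n : ℝ) * (-(1 / (n : ℝ)))) := by
            rw [← Real.exp_nat_mul]
        _ = Real.exp (-1) := by
            congr 1
            field_simp
        _ = 1 / Real.exp 1 := by
            rw [Real.exp_neg]; exact inv_eq_one_div _
    linarith
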